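/- Positive semidefiniteness of the Pock–Chambolle diagonal preconditioner (Section 1.1.2, footnote 2). Let K ∈ ℝ^{m×d} be a matrix such that every row of K and every column of K contains at least one nonzero entry, and let λ > 0. Define diagonal matrices Σ ∈ ℝ^{m×m} and T ∈ ℝ^{d×d} by Σ_{ii} = λ / Σ_j |K_{ij}| and T_{jj} = λ^{-1} / Σ_i |K_{ij}|. Then the matrix M = [[T^{-1}, −Kᵀ], [−K, Σ^{-1}]] is positive semidefinite; equivalently, for all x ∈ ℝ^d and w ∈ ℝ^m, xᵀT^{-1}x − 2 wᵀKx + wᵀΣ^{-1}w ≥ 0, which is equivalent to ‖Σ^{1/2} K T^{1/2}‖ ≤ 1 in operator norm. -/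

import Mathlib

open Matrix

private lemma amgm_term (lam a b c : ℝ) (hlam : 0 < lam) :
    2 * (b * (c * a)) ≤ lam * |c| * a ^ 2 + lam⁻¹ * |c| * b ^ 2 := by
  have habs : b * (c * a) ≤ |c| * (|a| * |b|) := by
    calc b * (c * a) ≤ |b * (c * a)| := le_abs_self _
      _ = |c| * (|a| * |b|) := by rw [abs_mul, abs_mul]; ring
  have h2 : 2 * (|a| * |b|) ≤ lam * a ^ 2 + lam⁻¹ * b ^ 2 := by
    have hl := hlam.ne'
    have hmul : lam * (2 * (|a| * |b|)) ≤ lam * (lam * a ^ 2 + lam⁻¹ * b ^ 2) := by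
      have hre : lam * (lam * a ^ 2 + lam⁻¹ * b ^ 2) = lam ^ 2 * a ^ 2 + b ^ 2 := by
        field_simp
      rw [hre]
      nlinarith [sq_nonneg (lam * |a| - |b|), sq_abs a, sq_abs b]
    exact le_of_mul_le_mul_left hmul hlam
  nlinarith [abs_nonneg c, mul_le_mul_of_nonneg_left h2 (abs_nonneg c)]

private lemma quad_key (d m : ℕ) (K : Matrix (Fin m) (Fin d) ℝ)
    (lam : ℝ) (hlam : 0 < lam) (x : Fin d → ℝ) (w : Fin m → ℝ) :
    0 ≤ (∑ j, (lam * ∑ i, |K i j|) * x j ^ 2)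
          - 2 * (w ⬝ᵥ K.mulVec x)
          + ∑ i, (lam⁻¹ * ∑ j, |K i j|) * w i ^ 2 := by
  have h1 : (∑ j, (lam * ∑ i, |K i j|) * x j ^ 2)
      = ∑ i, ∑ j, lam * |K i j| * x j ^ 2 := by
    rw [Finset.sum_comm]
    refine Finset.sum_congr rfl fun j _ => ?_
    rw [Finset.mul_sum, Finset.sum_mul]
  have h2 : (∑ i, (lam⁻¹ * ∑ j, |K i j|) * w i ^ 2)
      = ∑ i, ∑ j, lam⁻¹ * |K i j| * w i ^ 2 := by
    refine Finset.sum_congr rfl fun i _ => ?_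
    rw [Finset.mul_sum, Finset.sum_mul]
  have h3 : w ⬝ᵥ K.mulVec x = ∑ i, ∑ j, w i * (K i j * x j) := by
    simp [dotProduct, mulVec, Finset.mul_sum]
  rw [h1, h2, h3, Finset.mul_sum, ← Finset.sum_sub_distrib, ← Finset.sum_add_distrib]
  refine Finset.sum_nonneg fun i _ => ?_
  rw [Finset.mul_sum, ← Finset.sum_sub_distrib, ← Finset.sum_add_distrib]
  refine Finset.sum_nonneg fun j _ => ?_
  have := amgm_term lam (x j) (w i) (K i j) hlam
  linarith

theorem pock_chambolle_preconditioner_psd (d m : ℕ) (K : Matrix (Fin m) (Fin d) ℝ)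
    (hrow : ∀ i, ∃ j, K i j ≠ 0) (hcol : ∀ j, ∃ i, K i j ≠ 0)
    (lam : ℝ) (hlam : 0 < lam) :
    (Matrix.fromBlocks
        (Matrix.diagonal fun j => lam⁻¹ / ∑ i, |K i j|)⁻¹ (-Kᵀ) (-K)
        (Matrix.diagonal fun i => lam / ∑ j, |K i j|)⁻¹).PosSemidef ∧
    ∀ (x : Fin d → ℝ) (w : Fin m → ℝ),
      0 ≤ x ⬝ᵥ ((Matrix.diagonal fun j => lam⁻¹ / ∑ i, |K i j|)⁻¹).mulVec x
          - 2 * (w ⬝ᵥ K.mulVec x)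
          + w ⬝ᵥ ((Matrix.diagonal fun i => lam / ∑ j, |K i j|)⁻¹).mulVec w := by
  -- positivity of the column and row sums
  have hcs : ∀ j, 0 < ∑ i, |K i j| := fun j => by
    obtain ⟨i, hi⟩ := hcol j
    exact Finset.sum_pos' (fun i _ => abs_nonneg _)
      ⟨i, Finset.mem_univ i, abs_pos.mpr hi⟩
  have hrs : ∀ i, 0 < ∑ j, |K i j| := fun i => by
    obtain ⟨j, hj⟩ := hrow i
    exact Finset.sum_pos' (fun j _ => abs_nonneg _)
      ⟨j, Finset.mem_univ j, abs_pos.mpr hj⟩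
  -- compute the inverses of the diagonal matrices
  have hT : (Matrix.diagonal fun j => lam⁻¹ / ∑ i, |K i j|)⁻¹
      = Matrix.diagonal fun j => lam * ∑ i, |K i j| := by
    refine Matrix.inv_eq_right_inv ?_
    rw [Matrix.diagonal_mul_diagonal]
    convert Matrix.diagonal_one with j
    have hs := (hcs j).ne'
    have hl := hlam.ne'
    field_simp
  have hS : (Matrix.diagonal fun i => lam / ∑ j, |K i j|)⁻¹
      = Matrix.diagonal fun i => lam⁻¹ * ∑ j, |K i j| := by
    refine Matrix.inv_eq_right_inv ?_
    rw [Matrix.diagonal_mul_diagonal]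
    convert Matrix.diagonal_one with i
    have hs := (hrs i).ne'
    have hl := hlam.ne'
    field_simp
  have key : ∀ (x : Fin d → ℝ) (w : Fin m → ℝ),
      0 ≤ x ⬝ᵥ ((Matrix.diagonal fun j => lam⁻¹ / ∑ i, |K i j|)⁻¹).mulVec x
          - 2 * (w ⬝ᵥ K.mulVec x)
          + w ⬝ᵥ ((Matrix.diagonal fun i => lam / ∑ j, |K i j|)⁻¹).mulVec w := by
    intro x w
    rw [hT, hS]
    have hx : x ⬝ᵥ (Matrix.diagonal fun j => lam * ∑ i, |K i j|).mulVec x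
        = ∑ j, (lam * ∑ i, |K i j|) * x j ^ 2 := by
      simp [dotProduct, mulVec_diagonal]
      exact Finset.sum_congr rfl fun j _ => by ring
    have hw : w ⬝ᵥ (Matrix.diagonal fun i => lam⁻¹ * ∑ j, |K i j|).mulVec w
        = ∑ i, (lam⁻¹ * ∑ j, |K i j|) * w i ^ 2 := by
      simp [dotProduct, mulVec_diagonal]
      exact Finset.sum_congr rfl fun i _ => by ring
    rw [hx, hw]
    exact quad_key d m K lam hlam x w
  refine ⟨Matrix.posSemidef_iff_dotProduct_mulVec.mpr ⟨?_, ?_⟩, key⟩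
  · rw [Matrix.isHermitian_fromBlocks_iff]
    refine ⟨?_, ?_, ?_, ?_⟩
    · rw [hT]; exact Matrix.isHermitian_diagonal _
    · simp
    · simp
    · rw [hS]; exact Matrix.isHermitian_diagonal _
  · intro z
    have hz := key (z ∘ Sum.inl) (z ∘ Sum.inr)
    rw [Matrix.fromBlocks_mulVec]
    have : z = Sum.elim (z ∘ Sum.inl) (z ∘ Sum.inr) := (Sum.elim_comp_inl_inr z).symm
    rw [show star z = z from rfl]
    nth_rewrite 1 [this]
    rw [sumElim_dotProduct_sumElim, dotProduct_add, dotProduct_add]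
    have hK1 : (z ∘ Sum.inl) ⬝ᵥ (-Kᵀ) *ᵥ (z ∘ Sum.inr) = -((z ∘ Sum.inr) ⬝ᵥ K *ᵥ (z ∘ Sum.inl)) := by
      rw [Matrix.neg_mulVec, dotProduct_neg, Matrix.dotProduct_mulVec, Matrix.vecMul_transpose]
      rw [dotProduct_comm]
    have hK2 : (z ∘ Sum.inr) ⬝ᵥ (-K) *ᵥ (z ∘ Sum.inl) = -((z ∘ Sum.inr) ⬝ᵥ K *ᵥ (z ∘ Sum.inl)) := by
      rw [Matrix.neg_mulVec, dotProduct_neg]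
    rw [hK1, hK2]
    linarith
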